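/- Let f, q ≥ 1 be integers, g ∈ {f,q}, ḡ the other element, ℓ ≥ 1, N ≥ fq + g + 2ℓ − 1, and ρ = m/p > 0. Then for ρ ∈ (0, 1/max(f,q)] ∪ (max(f,q), ∞), K_UL^GSCSA(f,q,g)(ρ) ≤ K_UL^USCSA(f,q,g)(ρ), where K_UL^USCSA(f,q,g)(ρ) = min( N(1 + ρ·ḡ/g)/(1+ρ), N(ḡ/g + ρ)/(1+ρ) ) and K_UL^GSCSA(f,q,g)(ρ) = min( (N/f)(ḡf + ρ·ḡ/q)/(1+ρ), (N/f)(ḡ/q + ρ·ḡf)/(1+ρ) ), assuming g, ḡ > 1. -/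

import Mathlib

/-- Uplink cost of the USCSA(f,q,g) scheme as a function of the aspect ratio
`ρ = m/p`, where `g ∈ {f,q}` and `gb` is the other element:
`K_UL^USCSA = min( N(1+ρ·gb/g)/(1+ρ), N(gb/g+ρ)/(1+ρ) )`. -/
noncomputable def KulUSCSA (N g gb ρ : ℝ) : ℝ :=
  min (N * (1 + ρ * (gb / g)) / (1 + ρ)) (N * (gb / g + ρ) / (1 + ρ))

/-- Uplink cost of the GSCSA(f,q,g) scheme as a function of `ρ = m/p`:
`K_UL^GSCSA = min( (N/f)(gbf + ρ·gb/q)/(1+ρ), (N/f)(gb/q + ρ·gbf)/(1+ρ) )`. -/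
noncomputable def KulGSCSA (N f q gb ρ : ℝ) : ℝ :=
  min ((N / f) * (gb * f + ρ * (gb / q)) / (1 + ρ))
      ((N / f) * (gb / q + ρ * (gb * f)) / (1 + ρ))

set_option maxHeartbeats 1600000 in
/-- For `g ∈ {f,q}` with `g, gb > 1`, `ℓ ≥ 1`,
`N ≥ fq + g + 2ℓ − 1` and aspect ratio `ρ ∈ (0, 1/max(f,q)] ∪ (max(f,q), ∞)`,
the GSCSA uplink cost is at most the USCSA uplink cost. -/
theorem gscsa_le_uscsa_uplink
    (f q g gb ℓ N : ℕ) (hf : 1 ≤ f) (hq : 1 ≤ q)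
    (hg : (g = f ∧ gb = q) ∨ (g = q ∧ gb = f))
    (hg1 : 1 < g) (hgb1 : 1 < gb) (hℓ : 1 ≤ ℓ)
    (hN : f * q + g + 2 * ℓ - 1 ≤ N)
    (ρ : ℝ) (hρ : 0 < ρ)
    (hrange : ρ ≤ 1 / ((max f q : ℕ) : ℝ) ∨ ((max f q : ℕ) : ℝ) < ρ) :
    KulGSCSA N f q gb ρ ≤ KulUSCSA N g gb ρ := by
  have hN0 : (0:ℝ) ≤ N := Nat.cast_nonneg N
  have h1ρ : (0:ℝ) < 1 + ρ := by linarith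
  rcases hg with ⟨rfl, rfl⟩ | ⟨rfl, rfl⟩
  · -- f ↦ g, q ↦ gb
    have hF : (1:ℝ) < g := by exact_mod_cast hg1
    have hQ : (1:ℝ) < gb := by exact_mod_cast hgb1
    have hFpos : (0:ℝ) < g := by linarith
    have hQpos : (0:ℝ) < gb := by linarith
    have hM : ((max g gb : ℕ) : ℝ) = max (g:ℝ) (gb:ℝ) := by simp [Nat.cast_max]
    have hMF : (g:ℝ) ≤ ((max g gb : ℕ) : ℝ) := by rw [hM]; exact le_max_left _ _
    have hMQ : (gb:ℝ) ≤ ((max g gb : ℕ) : ℝ) := by rw [hM]; exact le_max_right _ _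
    have hMpos : (0:ℝ) < ((max g gb : ℕ) : ℝ) := by linarith
    unfold KulGSCSA KulUSCSA
    have hQQ : (gb:ℝ) / gb = 1 := div_self (ne_of_gt hQpos)
    rw [hQQ]
    rcases hrange with hs | hl
    · have hρM : ρ * ((max g gb : ℕ) : ℝ) ≤ 1 := by
        rw [← le_div_iff₀ hMpos]; exact hs
      have hρF : ρ * (g:ℝ) ≤ 1 := le_trans (mul_le_mul_of_nonneg_left hMF hρ.le) hρM
      have hρQ : ρ * (gb:ℝ) ≤ 1 := le_trans (mul_le_mul_of_nonneg_left hMQ hρ.le) hρM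
      have k1 : (0:ℝ) ≤ N * ((g:ℝ) - 1) * (1 - ρ * gb) :=
        mul_nonneg (mul_nonneg hN0 (by linarith)) (by linarith)
      have k2 : (0:ℝ) ≤ N * ((gb:ℝ) - 1) * (1 - ρ * g) :=
        mul_nonneg (mul_nonneg hN0 (by linarith)) (by linarith)
      refine le_min (le_trans (min_le_right _ _) ?_) (le_trans (min_le_right _ _) ?_) <;>
        rw [div_le_div_iff_of_pos_right h1ρ, div_mul_eq_mul_div, div_le_iff₀ hFpos] <;>
        field_simp <;> nlinarith [k1, k2]
    · have hρF : (g:ℝ) ≤ ρ := le_of_lt (lt_of_le_of_lt hMF hl)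
      have hρQ : (gb:ℝ) ≤ ρ := le_of_lt (lt_of_le_of_lt hMQ hl)
      have k1 : (0:ℝ) ≤ N * ((gb:ℝ) - 1) * (ρ - g) :=
        mul_nonneg (mul_nonneg hN0 (by linarith)) (by linarith)
      have k2 : (0:ℝ) ≤ N * ((g:ℝ) - 1) * (ρ - gb) :=
        mul_nonneg (mul_nonneg hN0 (by linarith)) (by linarith)
      refine le_min (le_trans (min_le_left _ _) ?_) (le_trans (min_le_left _ _) ?_) <;>
        rw [div_le_div_iff_of_pos_right h1ρ, div_mul_eq_mul_div, div_le_iff₀ hFpos] <;>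
        field_simp <;> nlinarith [k1, k2]
  · -- q ↦ g, f ↦ gb
    have hF : (1:ℝ) < gb := by exact_mod_cast hgb1
    have hQ : (1:ℝ) < g := by exact_mod_cast hg1
    have hFpos : (0:ℝ) < gb := by linarith
    have hQpos : (0:ℝ) < g := by linarith
    have hM : ((max gb g : ℕ) : ℝ) = max (gb:ℝ) (g:ℝ) := by simp [Nat.cast_max]
    have hMF : (gb:ℝ) ≤ ((max gb g : ℕ) : ℝ) := by rw [hM]; exact le_max_left _ _
    have hMQ : (g:ℝ) ≤ ((max gb g : ℕ) : ℝ) := by rw [hM]; exact le_max_right _ _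
    have hMpos : (0:ℝ) < ((max gb g : ℕ) : ℝ) := by linarith
    unfold KulGSCSA KulUSCSA
    rcases hrange with hs | hl
    · have hρM : ρ * ((max gb g : ℕ) : ℝ) ≤ 1 := by
        rw [← le_div_iff₀ hMpos]; exact hs
      have hρF : ρ * (gb:ℝ) ≤ 1 := le_trans (mul_le_mul_of_nonneg_left hMF hρ.le) hρM
      have hρQ : ρ * (g:ℝ) ≤ 1 := le_trans (mul_le_mul_of_nonneg_left hMQ hρ.le) hρM
      have k1 : (0:ℝ) ≤ N * ((g:ℝ) - 1) * (1 - ρ * gb) :=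
        mul_nonneg (mul_nonneg hN0 (by linarith)) (by linarith)
      have k2 : (0:ℝ) ≤ N * ((gb:ℝ) - 1) * (1 - ρ * g) :=
        mul_nonneg (mul_nonneg hN0 (by linarith)) (by linarith)
      refine le_min (le_trans (min_le_right _ _) ?_) (le_trans (min_le_right _ _) ?_) <;>
        rw [div_le_div_iff_of_pos_right h1ρ, div_mul_eq_mul_div, div_le_iff₀ hFpos] <;>
        field_simp <;> nlinarith [k1, k2]
    · have hρF : (gb:ℝ) ≤ ρ := le_of_lt (lt_of_le_of_lt hMF hl)
      have hρQ : (g:ℝ) ≤ ρ := le_of_lt (lt_of_le_of_lt hMQ hl)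
      have k1 : (0:ℝ) ≤ N * ((gb:ℝ) - 1) * (ρ - g) :=
        mul_nonneg (mul_nonneg hN0 (by linarith)) (by linarith)
      have k2 : (0:ℝ) ≤ N * ((g:ℝ) - 1) * (ρ - gb) :=
        mul_nonneg (mul_nonneg hN0 (by linarith)) (by linarith)
      refine le_min (le_trans (min_le_left _ _) ?_) (le_trans (min_le_left _ _) ?_) <;>
        rw [div_le_div_iff_of_pos_right h1ρ, div_mul_eq_mul_div, div_le_iff₀ hFpos] <;>
        field_simp <;> nlinarith [k1, k2]
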